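/- Let M be a matroid on a ground set α, and let S₁ and S₂ be finite independent sets of M with the same cardinality k. Then there exists a bijection f from S₂ \ S₁ to S₁ \ S₂ such that for every i ∈ S₂ \ S₁, the set (S₁ \ {f(i)}) ∪ {i} is independent in M. -/

import Mathlib

open Set

/-- If `I` is independent, `J ⊆ M.E` and `I ⊆ M.closure J`, and `J` is independent,
then `I.encard ≤ J.encard`. -/
lemma indep_card_le_of_subset_closure {α : Type*} {M : Matroid α} {I J : Set α}
    (hI : M.Indep I) (hJ : M.Indep J) (h : I ⊆ M.closure J) : I.encard ≤ J.encard := by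
  obtain ⟨I', hI'basis, hII'⟩ := hI.subset_isBasis_of_subset h (M.closure_subset_ground J)
  calc I.encard ≤ I'.encard := Set.encard_le_encard hII'
    _ = J.encard := hI'basis.encard_eq_encard hJ.isBasis_closure

theorem matroid_replacement_property {α : Type*} [DecidableEq α] (M : Matroid α)
    (S₁ S₂ : Finset α) (k : ℕ)
    (h₁ : M.Indep (S₁ : Set α)) (h₂ : M.Indep (S₂ : Set α))
    (hk₁ : S₁.card = k) (hk₂ : S₂.card = k) :
    ∃ f : α → α, Set.BijOn f (↑(S₂ \ S₁) : Set α) (↑(S₁ \ S₂) : Set α) ∧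
      ∀ i ∈ S₂ \ S₁, M.Indep (insert i ((S₁ : Set α) \ {f i})) := by
  classical
  set D₂ := S₂ \ S₁ with hD₂
  set D₁ := S₁ \ S₂ with hD₁
  have hcard : D₁.card = D₂.card := by
    rw [hD₁, hD₂, Finset.card_sdiff_comm (hk₁.trans hk₂.symm)]
  set N : α → Finset α := fun x => D₁.filter (fun y => M.Indep (insert x ((S₁ : Set α) \ {y})))
    with hN
  -- membership in N
  have hNsub : ∀ x, N x ⊆ D₁ := fun x => Finset.filter_subset _ _
  -- Hall's condition
  have hall : ∀ A : Finset α, A ⊆ D₂ → A.card ≤ (A.biUnion N).card := by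
    intro A hA
    by_cases hex : ∃ x ∈ A, M.Indep (insert (x : α) (S₁ : Set α))
    · obtain ⟨x, hxA, hx⟩ := hex
      have hNx : N x = D₁ := by
        apply Finset.Subset.antisymm (hNsub x)
        intro y hy
        rw [hN, Finset.mem_filter]
        exact ⟨hy, hx.subset (insert_subset_insert (diff_subset))⟩
      have : D₁ ⊆ A.biUnion N := by
        rw [← hNx]; exact fun y hy => Finset.mem_biUnion.2 ⟨x, hxA, hy⟩
      calc A.card ≤ D₂.card := Finset.card_le_card hA
        _ = D₁.card := hcard.symm
        _ ≤ (A.biUnion N).card := Finset.card_le_card this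
    · push_neg at hex
      set NA := A.biUnion N with hNA
      have hNAsub : NA ⊆ D₁ := Finset.biUnion_subset.2 fun x _ => hNsub x
      -- each x ∈ A lies in the closure of (S₁ ∩ S₂) ∪ NA
      have hxcl : ∀ x ∈ A, (x : α) ∈ M.closure (↑((S₁ ∩ S₂) ∪ NA) : Set α) := by
        intro x hxA
        have hxD₂ : x ∈ D₂ := hA hxA
        have hxS₁ : x ∉ S₁ := (Finset.mem_sdiff.1 hxD₂).2
        have hxS₂ : x ∈ S₂ := (Finset.mem_sdiff.1 hxD₂).1
        have hxE : x ∈ M.E := h₂.subset_ground (by simpa using hxS₂)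
        -- x ∈ closure (S₁ \ {y}) for each y ∈ D₁ \ N x
        have hcly : ∀ y ∈ (D₁ \ N x : Finset α),
            (x : α) ∈ M.closure ((S₁ : Set α) \ {y}) := by
          intro y hy
          obtain ⟨hyD₁, hyN⟩ := Finset.mem_sdiff.1 hy
          have hind : ¬ M.Indep (insert x ((S₁ : Set α) \ {y})) := by
            intro h
            exact hyN (Finset.mem_filter.2 ⟨hyD₁, h⟩)
          have hsub : (S₁ : Set α) \ {y} ⊆ (S₁ : Set α) := diff_subset
          have hxnot : x ∉ (S₁ : Set α) \ {y} := fun h => hxS₁ (by simpa using h.1)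
          rw [(h₁.subset hsub).mem_closure_iff_of_notMem hxnot]
          refine ⟨hind, ?_⟩
          exact insert_subset hxE ((diff_subset).trans h₁.subset_ground)
        -- hence x ∈ closure (S₁ \ (D₁ \ N x))
        have hkey : (x : α) ∈ M.closure ((S₁ : Set α) \ (↑(D₁ \ N x) : Set α)) := by
          rcases (D₁ \ N x).eq_empty_or_nonempty with he | hne
          · rw [he]
            simp only [Finset.coe_empty, diff_empty]
            have hxcl₁ : (x : α) ∈ M.closure (S₁ : Set α) := by
              rw [h₁.mem_closure_iff_of_notMem (by simpa using hxS₁)]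
              exact ⟨hex x hxA, insert_subset hxE h₁.subset_ground⟩
            exact hxcl₁
          · have hJs : ((fun y => (S₁ : Set α) \ {y}) '' ↑(D₁ \ N x)).Nonempty :=
              (Set.Nonempty.image _ (Finset.coe_nonempty.2 hne))
            have := h₁.closure_sInter_eq_biInter_closure_of_forall_subset hJs
              (by rintro J ⟨y, _, rfl⟩; exact diff_subset)
            have hInter : ⋂₀ ((fun y => (S₁ : Set α) \ {y}) '' ↑(D₁ \ N x)) =
                (S₁ : Set α) \ (↑(D₁ \ N x) : Set α) := by
              ext z
              simp only [sInter_image, mem_iInter, mem_diff, Finset.mem_coe,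
                mem_singleton_iff]
              constructor
              · intro h
                obtain ⟨y₀, hy₀⟩ := hne
                exact ⟨(h y₀ hy₀).1, fun hz => (h z hz).2 rfl⟩
              · rintro ⟨hz, hz'⟩ y hy
                exact ⟨hz, fun h => hz' (h ▸ hy)⟩
            rw [hInter] at this
            rw [this, mem_iInter₂]
            rintro J ⟨y, hy, rfl⟩
            exact hcly y hy
        refine M.closure_subset_closure ?_ hkey
        intro z hz
        obtain ⟨hzS₁, hz'⟩ := hz
        simp only [Finset.coe_union, Finset.coe_inter, mem_union, mem_inter_iff,
          Finset.mem_coe]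
        by_cases hzS₂ : z ∈ S₂
        · exact Or.inl ⟨by simpa using hzS₁, hzS₂⟩
        · right
          have hzD₁ : z ∈ D₁ := Finset.mem_sdiff.2 ⟨by simpa using hzS₁, hzS₂⟩
          have hzN : z ∈ N x := by
            by_contra hc
            exact hz' (by simp [Finset.mem_sdiff, hzD₁, hc])
          exact Finset.mem_biUnion.2 ⟨x, hxA, hzN⟩
      -- cardinality argument
      have hBindep : M.Indep (↑((S₁ ∩ S₂) ∪ A) : Set α) := by
        apply h₂.subset
        intro z hz
        simp only [Finset.coe_union, Finset.coe_inter, mem_union, mem_inter_iff,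
          Finset.mem_coe] at hz ⊢
        rcases hz with ⟨_, h⟩ | h
        · exact h
        · exact (Finset.mem_sdiff.1 (hA h)).1
      have hJindep : M.Indep (↑((S₁ ∩ S₂) ∪ NA) : Set α) := by
        apply h₁.subset
        intro z hz
        simp only [Finset.coe_union, Finset.coe_inter, mem_union, mem_inter_iff,
          Finset.mem_coe] at hz ⊢
        rcases hz with ⟨h, _⟩ | h
        · exact h
        · exact (Finset.mem_sdiff.1 (hNAsub h)).1
      have hBcl : (↑((S₁ ∩ S₂) ∪ A) : Set α) ⊆ M.closure (↑((S₁ ∩ S₂) ∪ NA) : Set α) := by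
        intro z hz
        simp only [Finset.coe_union, mem_union, Finset.mem_coe] at hz
        rcases hz with h | h
        · exact M.subset_closure _ hJindep.subset_ground
            (by simp [Finset.coe_union]; exact Or.inl (by simpa using h))
        · exact hxcl z h
      have hle := indep_card_le_of_subset_closure hBindep hJindep hBcl
      rw [Set.encard_coe_eq_coe_finsetCard, Set.encard_coe_eq_coe_finsetCard,
        Nat.cast_le] at hle
      have hd₁ : Disjoint (S₁ ∩ S₂) A := by
        rw [Finset.disjoint_left]
        intro z hz hzA
        exact (Finset.mem_sdiff.1 (hA hzA)).2 (Finset.mem_inter.1 hz).1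
      have hd₂ : Disjoint (S₁ ∩ S₂) NA := by
        rw [Finset.disjoint_left]
        intro z hz hzN
        exact (Finset.mem_sdiff.1 (hNAsub hzN)).2 (Finset.mem_inter.1 hz).2
      rw [Finset.card_union_of_disjoint hd₁, Finset.card_union_of_disjoint hd₂] at hle
      omega
  -- apply Hall's theorem
  have hall' : ∀ s : Finset {x // x ∈ D₂}, s.card ≤ (s.biUnion fun i => N i.1).card := by
    intro s
    have him : (s.image Subtype.val).card = s.card :=
      Finset.card_image_of_injective _ Subtype.val_injective
    have hsub : s.image Subtype.val ⊆ D₂ := by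
      intro z hz
      obtain ⟨⟨z', hz'⟩, _, rfl⟩ := Finset.mem_image.1 hz
      exact hz'
    have := hall _ hsub
    rw [him] at this
    refine this.trans (Finset.card_le_card ?_)
    intro z hz
    rw [Finset.mem_biUnion] at hz ⊢
    obtain ⟨x, hx, hzx⟩ := hz
    obtain ⟨⟨x', hx'⟩, hmem, rfl⟩ := Finset.mem_image.1 hx
    exact ⟨⟨x', hx'⟩, hmem, hzx⟩
  obtain ⟨f₀, hf₀inj, hf₀mem⟩ :=
    (Finset.all_card_le_biUnion_card_iff_existsInjective' (fun i : {x // x ∈ D₂} => N i.1)).1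
      hall'
  refine ⟨fun a => if h : a ∈ D₂ then f₀ ⟨a, h⟩ else a, ?_, ?_⟩
  · set f : α → α := fun a => if h : a ∈ D₂ then f₀ ⟨a, h⟩ else a with hf
    have hmaps : ∀ a ∈ D₂, f a ∈ D₁ := by
      intro a ha
      simp only [hf, dif_pos ha]
      exact hNsub _ (hf₀mem ⟨a, ha⟩)
    have hinj : Set.InjOn f (↑D₂ : Set α) := by
      intro a ha b hb hab
      simp only [Finset.mem_coe] at ha hb
      simp only [hf, dif_pos ha, dif_pos hb] at hab
      exact congrArg Subtype.val (hf₀inj hab)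
    have himg : D₂.image f = D₁ := by
      apply Finset.eq_of_subset_of_card_le
      · intro z hz
        obtain ⟨a, ha, rfl⟩ := Finset.mem_image.1 hz
        exact hmaps a ha
      · rw [Finset.card_image_of_injOn (by simpa using hinj)]
        exact hcard.le
    refine ⟨fun a ha => by exact_mod_cast hmaps a ha, hinj, ?_⟩
    intro z hz
    have : z ∈ D₂.image f := himg ▸ (by simpa using hz)
    obtain ⟨a, ha, rfl⟩ := Finset.mem_image.1 this
    exact ⟨a, by simpa using ha, rfl⟩
  · intro i hi
    simp only [dif_pos hi]
    have := hf₀mem ⟨i, hi⟩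
    exact (Finset.mem_filter.1 this).2
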